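/- arXiv:1404.1567 — 4 statements merged into one kernel-verified Lean document; each statement's English description precedes it below -/
import Mathlib

section
/- Let n ≥ 3 and let W be the n × n Wielandt matrix: W i j = 1 if (i ≥ 2 and j = i-1) or (i = 1 and j ∈ {n-1, n}), and W i j = 0 otherwise. Then the (n, n-1) entry of W^{n^2-3n+2} is zero. -/
/-- The `n × n` Wielandt matrix: `W i j = 1` iff (`i ≥ 2` and `j = i - 1`) or
(`i = 1` and `j ∈ {n-1, n}`), written here with 0-based indexing via `Fin n`. -/
def wielandt (n : ℕ) : Matrix (Fin n) (Fin n) ℕ := fun i j =>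
  if (1 ≤ i.val ∧ j.val + 1 = i.val) ∨ (i.val = 0 ∧ (j.val = n - 2 ∨ j.val = n - 1))
  then 1 else 0

/-- Any nonzero entry of `W^m` corresponds to a walk in the Wielandt digraph:
either a pure descent `i → i-1 → ⋯ → j`, or a walk passing through vertex `0`,
whose length decomposes using cycles of lengths `n-1` and `n`. -/
lemma wielandt_walk_inv (n : ℕ) (hn : 3 ≤ n) :
    ∀ m (i j : Fin n), (wielandt n ^ m) i j ≠ 0 →
      (j.val ≤ i.val ∧ m + j.val = i.val) ∨
      ∃ a b : ℕ, m + j.val = i.val + (n-1) + a * (n-1) + b * n ∨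
                 m + j.val = i.val + n + a * (n-1) + b * n := by
  intro m
  induction m with
  | zero =>
    intro i j h
    rw [pow_zero, Matrix.one_apply] at h
    split at h
    · left; subst ‹i = j›; omega
    · exact absurd rfl h
  | succ m ih =>
    intro i j h
    rw [pow_succ', Matrix.mul_apply] at h
    obtain ⟨k, -, hk⟩ := Finset.exists_ne_zero_of_sum_ne_zero h
    have hW : wielandt n i k ≠ 0 := fun h0 => hk (by rw [h0, zero_mul])
    have hP : (wielandt n ^ m) k j ≠ 0 := fun h0 => hk (by rw [h0, mul_zero])
    have hcond : (1 ≤ i.val ∧ k.val + 1 = i.val) ∨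
        (i.val = 0 ∧ (k.val = n - 2 ∨ k.val = n - 1)) := by
      by_contra hc
      exact hW (by simp only [wielandt, if_neg hc])
    have hkj := ih k j hP
    have hj : j.val < n := j.isLt
    rcases hcond with ⟨hi1, hki⟩ | ⟨hi0, hk2 | hk2⟩
    · -- step down: k + 1 = i
      rcases hkj with ⟨h1, h2⟩ | ⟨a, b, h2 | h2⟩
      · left; omega
      · exact Or.inr ⟨a, b, Or.inl (by omega)⟩
      · exact Or.inr ⟨a, b, Or.inr (by omega)⟩
    · -- i = 0, k = n-2
      rcases hkj with ⟨h1, h2⟩ | ⟨a, b, h2 | h2⟩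
      · exact Or.inr ⟨0, 0, Or.inl (by omega)⟩
      · refine Or.inr ⟨a+1, b, Or.inl ?_⟩
        have e : (a+1)*(n-1) = a*(n-1) + (n-1) := by ring
        omega
      · refine Or.inr ⟨a+1, b, Or.inr ?_⟩
        have e : (a+1)*(n-1) = a*(n-1) + (n-1) := by ring
        omega
    · -- i = 0, k = n-1
      rcases hkj with ⟨h1, h2⟩ | ⟨a, b, h2 | h2⟩
      · exact Or.inr ⟨0, 0, Or.inr (by omega)⟩
      · refine Or.inr ⟨a, b+1, Or.inl ?_⟩
        have e : (b+1)*n = b*n + n := by ring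
        omega
      · refine Or.inr ⟨a, b+1, Or.inr ?_⟩
        have e : (b+1)*n = b*n + n := by ring
        omega

/-- `(n-1)(n-2) - t - (n-1)` (for `t = 1, 2`) is not representable as a nonnegative
combination of `n-1` and `n` (a Frobenius-number style fact). -/
lemma wielandt_no_rep (n a b t : ℕ) (hn : 3 ≤ n) (ht1 : 1 ≤ t) (ht2 : t ≤ 2)
    (h : (n-1)*(n-2) = n - 1 + t + a*(n-1) + b*n) : False := by
  have k1 : b*(n-1) + b*1 = b*n := by rw [← Nat.mul_add]; congr 1; omega
  have k2 : (1+a+b)*(n-1) = 1*(n-1) + a*(n-1) + b*(n-1) := by ring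
  have e : (1+a+b)*(n-1) + (t+b) = (n-1)*(n-2) := by omega
  have hdvd : (n-1) ∣ (t+b) := by
    have h1 : (n-1) ∣ (1+a+b)*(n-1) := dvd_mul_left _ _
    have h2 : (n-1) ∣ (1+a+b)*(n-1) + (t+b) := e ▸ dvd_mul_right (n-1) (n-2)
    exact (Nat.dvd_add_right h1).mp h2
  obtain ⟨c, hc⟩ := hdvd
  have hc1 : 1 ≤ c := by
    rcases Nat.eq_zero_or_pos c with rfl | h'
    · simp at hc; omega
    · exact h'
  rw [hc] at e
  have e3 : (1+a+b+c)*(n-1) = (n-2)*(n-1) := by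
    calc (1+a+b+c)*(n-1) = (1+a+b)*(n-1) + (n-1)*c := by ring
    _ = (n-1)*(n-2) := e
    _ = (n-2)*(n-1) := mul_comm _ _
  have e4 : 1+a+b+c = n-2 := Nat.eq_of_mul_eq_mul_right (by omega) e3
  have h5 : n ≤ n*c := Nat.le_mul_of_pos_right n hc1
  have h6 : (n-1)*c + 1*c = n*c := by rw [← Nat.add_mul]; congr 1; omega
  omega

/-- The `(n, n-1)` entry of the `(n^2 - 3n + 2)`-th power of the Wielandt matrix is zero. -/
theorem wielandt_pow_entry_zero (n : ℕ) (hn : 3 ≤ n) :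
    (wielandt n ^ (n ^ 2 - 3 * n + 2)) ⟨n - 1, by omega⟩ ⟨n - 2, by omega⟩ = 0 := by
  by_contra h
  have hm : n ^ 2 - 3 * n + 2 = (n-1)*(n-2) := by
    obtain ⟨k, rfl⟩ : ∃ k, n = k + 3 := ⟨n - 3, by omega⟩
    have e1 : (k+3)^2 = k*k + 6*k + 9 := by ring
    have a1 : k+3-1 = k+2 := by omega
    have a2 : k+3-2 = k+1 := by omega
    have e2 : (k+3-1)*(k+3-2) = (k+2)*(k+1) := by rw [a1, a2]
    have e3 : (k+2)*(k+1) = k*k + 3*k + 2 := by ring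
    omega
  rw [hm] at h
  have := wielandt_walk_inv n hn ((n-1)*(n-2)) ⟨n - 1, by omega⟩ ⟨n - 2, by omega⟩ h
  simp only [] at this
  have hP2 : 2*1 ≤ (n-1)*(n-2) := Nat.mul_le_mul (by omega) (by omega)
  rcases this with ⟨h1, h2⟩ | ⟨a, b, h2 | h2⟩
  · omega
  · exact wielandt_no_rep n a b 1 hn (by norm_num) (by norm_num) (by omega)
  · exact wielandt_no_rep n a b 2 hn (by norm_num) (by norm_num) (by omega)
end

section
/- Let n ≥ 3 and W the n × n Wielandt matrix. For each k with 1 ≤ k ≤ n^2 - 3n + 2, the set S_k(W, n-1) = { u : (W^k) u (n-1) > 0 } satisfies 2 ≤ |S_k(W, n-1)| ≤ n - 1. -/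
def Cw (n m u : ℕ) : Prop :=
  u = m + (n - 2) ∨ ∃ a b e, (e = 1 ∨ e = 2) ∧ m = u + a * (n - 1) + b * n + e

lemma wielandt_pow_pos (n : ℕ) (hn : 3 ≤ n) :
    ∀ (m : ℕ) (u : Fin n),
      (0 < (wielandt n ^ m) u ⟨n - 2, by omega⟩ ↔ Cw n m u.val) := by
  intro m
  induction m with
  | zero =>
    intro u
    simp only [pow_zero, Matrix.one_apply, Cw]
    constructor
    · intro h
      split at h
      · next h' => left; rw [h']; simp
      · simp at h
    · rintro (h | ⟨a, b, e, he, h⟩)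
      · have : u = ⟨n - 2, by omega⟩ := Fin.ext (by simpa using h)
        simp [this]
      · omega
  | succ m ih =>
    intro u
    rw [pow_succ', Matrix.mul_apply]
    have hpos : (0 < ∑ v, wielandt n u v * (wielandt n ^ m) v (⟨n - 2, by omega⟩ : Fin n)) ↔
        ∃ v : Fin n, wielandt n u v ≠ 0 ∧ (wielandt n ^ m) v ⟨n - 2, by omega⟩ ≠ 0 := by
      rw [Nat.pos_iff_ne_zero, Ne, Finset.sum_eq_zero_iff]
      push_neg
      simp [Nat.mul_ne_zero_iff]
    rw [hpos]
    by_cases hu : u.val = 0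
    · have hW : ∀ v : Fin n, (wielandt n u v ≠ 0 ↔ (v.val = n - 2 ∨ v.val = n - 1)) := by
        intro v
        unfold wielandt
        by_cases hc : (1 ≤ u.val ∧ v.val + 1 = u.val) ∨ (u.val = 0 ∧ (v.val = n - 2 ∨ v.val = n - 1))
        · simp only [if_pos hc]; simp; omega
        · simp only [if_neg hc]; simp; omega
      constructor
      · rintro ⟨v, h1, h2⟩
        rw [hW] at h1
        have h2' := (ih v).mp (Nat.pos_of_ne_zero h2)
        unfold Cw at h2' ⊢
        right
        rcases h1 with h1 | h1 <;> rcases h2' with h | ⟨a, b, e, he, h⟩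
        · exact ⟨0, 0, 1, Or.inl rfl, by omega⟩
        · refine ⟨a + 1, b, e, he, ?_⟩
          have : (a + 1) * (n - 1) = a * (n - 1) + (n - 1) := by ring
          omega
        · exact ⟨0, 0, 2, Or.inr rfl, by omega⟩
        · refine ⟨a, b + 1, e, he, ?_⟩
          have : (b + 1) * n = b * n + n := by ring
          omega
      · rintro (h | ⟨a, b, e, he, h⟩)
        · omega
        · rcases Nat.eq_zero_or_pos a with ha | ha
          · rcases Nat.eq_zero_or_pos b with hb | hb
            · subst ha; subst hb
              rcases he with rfl | rfl
              · refine ⟨⟨n - 2, by omega⟩, (hW _).mpr (Or.inl rfl), ?_⟩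
                have : m = 0 := by omega
                subst this
                apply Nat.pos_iff_ne_zero.mp
                rw [ih]
                left; simp
              · refine ⟨⟨n - 1, by omega⟩, (hW _).mpr (Or.inr rfl), ?_⟩
                have : m = 1 := by omega
                subst this
                apply Nat.pos_iff_ne_zero.mp
                rw [ih]
                left; simp; omega
            · subst ha
              refine ⟨⟨n - 1, by omega⟩, (hW _).mpr (Or.inr rfl), ?_⟩
              apply Nat.pos_iff_ne_zero.mp
              rw [ih]
              right
              refine ⟨0, b - 1, e, he, ?_⟩
              obtain ⟨b', rfl⟩ : ∃ b', b = b' + 1 := ⟨b - 1, by omega⟩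
              have : (b' + 1) * n = b' * n + n := by ring
              simp only [Nat.add_sub_cancel]
              omega
          · refine ⟨⟨n - 2, by omega⟩, (hW _).mpr (Or.inl rfl), ?_⟩
            apply Nat.pos_iff_ne_zero.mp
            rw [ih]
            right
            refine ⟨a - 1, b, e, he, ?_⟩
            obtain ⟨a', rfl⟩ : ∃ a', a = a' + 1 := ⟨a - 1, by omega⟩
            have : (a' + 1) * (n - 1) = a' * (n - 1) + (n - 1) := by ring
            simp only [Nat.add_sub_cancel]
            omega
    · -- u.val ≥ 1
      have hW : ∀ v : Fin n, (wielandt n u v ≠ 0 ↔ v.val + 1 = u.val) := by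
        intro v
        unfold wielandt
        by_cases hc : (1 ≤ u.val ∧ v.val + 1 = u.val) ∨ (u.val = 0 ∧ (v.val = n - 2 ∨ v.val = n - 1))
        · simp only [if_pos hc]; simp; omega
        · simp only [if_neg hc]; simp; omega
      have hv0 : (u.val - 1) < n := by omega
      constructor
      · rintro ⟨v, h1, h2⟩
        rw [hW] at h1
        have h2' := (ih v).mp (Nat.pos_of_ne_zero h2)
        unfold Cw at h2' ⊢
        rcases h2' with h | ⟨a, b, e, he, h⟩
        · left; omega
        · right; exact ⟨a, b, e, he, by omega⟩
      · intro h
        refine ⟨⟨u.val - 1, hv0⟩, (hW _).mpr (by simp; omega), ?_⟩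
        apply Nat.pos_iff_ne_zero.mp
        rw [ih]
        unfold Cw at h ⊢
        rcases h with h | ⟨a, b, e, he, h⟩
        · left; simp; omega
        · right; exact ⟨a, b, e, he, by simp; omega⟩

lemma wielandt_card_mono (n : ℕ) (hn : 3 ≤ n) (k : ℕ) :
    (Finset.univ.filter
        fun u : Fin n => 0 < (wielandt n ^ k) u ⟨n - 2, by omega⟩).card ≤
    (Finset.univ.filter
        fun u : Fin n => 0 < (wielandt n ^ (k + 1)) u ⟨n - 2, by omega⟩).card := by
  have : NeZero n := ⟨by omega⟩
  apply Finset.card_le_card_of_injOn (fun v => v + 1)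
  · intro v hv
    simp only [Finset.mem_coe, Finset.mem_filter, Finset.mem_univ, true_and] at hv ⊢
    rw [pow_succ', Matrix.mul_apply]
    have hW : wielandt n (v + 1) v = 1 := by
      have hval : (v + 1).val = (v.val + 1) % n := by
        simp [Fin.add_def, Nat.mod_eq_of_lt (show 1 < n by omega)]
      unfold wielandt
      rw [if_pos]
      by_cases h : v.val + 1 = n
      · right
        rw [hval, h, Nat.mod_self]
        exact ⟨rfl, Or.inr (by omega)⟩
      · left
        have : (v + 1).val = v.val + 1 := by
          rw [hval, Nat.mod_eq_of_lt (by omega)]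
        omega
    calc 0 < wielandt n (v + 1) v * (wielandt n ^ k) v ⟨n - 2, by omega⟩ := by
            rw [hW]; simpa using hv
      _ ≤ ∑ x, wielandt n (v + 1) x * (wielandt n ^ k) x ⟨n - 2, by omega⟩ :=
            Finset.single_le_sum
              (f := fun x => wielandt n (v + 1) x * (wielandt n ^ k) x ⟨n - 2, by omega⟩)
              (fun i _ => Nat.zero_le _) (Finset.mem_univ v)
  · intro a _ b _ h
    exact add_left_injective 1 h

/-- For `1 ≤ k ≤ n^2 - 3n + 2`, the set `S_k(W, n-1)` has cardinality between
`2` and `n - 1`. -/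
theorem wielandt_S_card (n : ℕ) (hn : 3 ≤ n) (k : ℕ) (hk1 : 1 ≤ k)
    (hk2 : k ≤ n ^ 2 - 3 * n + 2) :
    2 ≤ (Finset.univ.filter
          fun u : Fin n => 0 < (wielandt n ^ k) u ⟨n - 2, by omega⟩).card ∧
    (Finset.univ.filter
          fun u : Fin n => 0 < (wielandt n ^ k) u ⟨n - 2, by omega⟩).card ≤ n - 1 := by
  set g : ℕ → ℕ := fun k =>
    (Finset.univ.filter
        fun u : Fin n => 0 < (wielandt n ^ k) u ⟨n - 2, by omega⟩).card with hg
  have hmono : Monotone g := monotone_nat_of_le_succ (wielandt_card_mono n hn)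
  have hKk : k ≤ (n - 1) * (n - 2) := by
    obtain ⟨m, rfl⟩ : ∃ m, n = m + 3 := ⟨n - 3, by omega⟩
    have e1 : (m + 3) ^ 2 = m * m + 6 * m + 9 := by ring
    have e2 : (m + 3 - 1) * (m + 3 - 2) = m * m + 3 * m + 2 := by
      have ha : m + 3 - 1 = m + 2 := by omega
      have hb : m + 3 - 2 = m + 1 := by omega
      rw [ha, hb]; ring
    omega
  constructor
  · -- lower bound
    have h0 : (⟨0, by omega⟩ : Fin n) ∈ Finset.univ.filter
        fun u : Fin n => 0 < (wielandt n ^ 1) u ⟨n - 2, by omega⟩ := by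
      simp only [Finset.mem_filter, Finset.mem_univ, true_and]
      rw [wielandt_pow_pos n hn]
      exact Or.inr ⟨0, 0, 1, Or.inl rfl, by simp⟩
    have h1 : (⟨n - 1, by omega⟩ : Fin n) ∈ Finset.univ.filter
        fun u : Fin n => 0 < (wielandt n ^ 1) u ⟨n - 2, by omega⟩ := by
      simp only [Finset.mem_filter, Finset.mem_univ, true_and]
      rw [wielandt_pow_pos n hn]
      exact Or.inl (by simp; omega)
    have hne : (⟨0, by omega⟩ : Fin n) ≠ ⟨n - 1, by omega⟩ := by
      intro h
      have := Fin.mk.injEq .. ▸ h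
      have this : (0:ℕ) = n - 1 := congrArg Fin.val h
      omega
    have hsub : ({⟨0, by omega⟩, ⟨n - 1, by omega⟩} : Finset (Fin n)) ⊆
        Finset.univ.filter fun u : Fin n => 0 < (wielandt n ^ 1) u ⟨n - 2, by omega⟩ := by
      intro x hx
      simp only [Finset.mem_insert, Finset.mem_singleton] at hx
      rcases hx with rfl | rfl
      · exact h0
      · exact h1
    have h2 : 2 ≤ g 1 := by
      have := Finset.card_le_card hsub
      rwa [Finset.card_pair hne] at this
    exact h2.trans (hmono hk1)
  · -- upper bound
    have hnotC : ¬ Cw n ((n - 1) * (n - 2)) (n - 1) := by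
      unfold Cw
      rintro (h | ⟨a, b, e, he, h⟩)
      · obtain ⟨m, rfl⟩ : ∃ m, n = m + 3 := ⟨n - 3, by omega⟩
        have e2 : (m + 3 - 1) * (m + 3 - 2) = m * m + 3 * m + 2 := by
          have ha : m + 3 - 1 = m + 2 := by omega
          have hb : m + 3 - 2 = m + 1 := by omega
          rw [ha, hb]; ring
        omega
      · have hb : b * n = b * (n - 1) + b := by
          have h3 : n - 1 + 1 = n := by omega
          calc b * n = b * ((n - 1) + 1) := by rw [h3]
            _ = b * (n - 1) + b := by ring
        have expand : (1 + a + b) * (n - 1) = (n - 1) + a * (n - 1) + b * (n - 1) := by ring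
        have key : (n - 1) * (n - 2) = (1 + a + b) * (n - 1) + (b + e) := by omega
        have he' : 1 ≤ e ∧ e ≤ 2 := by rcases he with rfl | rfl <;> omega
        rcases le_or_gt (1 + a + b) (n - 3) with hd | hd
        · have h1 : ((1 + a + b) + 1) * (n - 1) ≤ (n - 2) * (n - 1) :=
            Nat.mul_le_mul_right _ (by omega)
          have h2 : ((1 + a + b) + 1) * (n - 1) = (1 + a + b) * (n - 1) + (n - 1) := by ring
          have h3 : (n - 2) * (n - 1) = (n - 1) * (n - 2) := Nat.mul_comm _ _
          omega
        · have h1 : (n - 2) * (n - 1) ≤ (1 + a + b) * (n - 1) :=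
            Nat.mul_le_mul_right _ (by omega)
          have h3 : (n - 2) * (n - 1) = (n - 1) * (n - 2) := Nat.mul_comm _ _
          omega
    have hsub : (Finset.univ.filter
        fun u : Fin n => 0 < (wielandt n ^ ((n - 1) * (n - 2))) u ⟨n - 2, by omega⟩) ⊆
        Finset.univ.erase ⟨n - 1, by omega⟩ := by
      intro u hu
      simp only [Finset.mem_filter, Finset.mem_univ, true_and] at hu
      rw [Finset.mem_erase]
      refine ⟨?_, Finset.mem_univ u⟩
      intro h
      apply hnotC
      have := (wielandt_pow_pos n hn _ u).mp hu
      rwa [h] at this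
    have hK : g ((n - 1) * (n - 2)) ≤ n - 1 := by
      have := Finset.card_le_card hsub
      rwa [Finset.card_erase_of_mem (Finset.mem_univ _), Finset.card_univ,
        Fintype.card_fin] at this
    exact (hmono hKk).trans hK
end

section
/- Let A be an n × n nonnegative real matrix. Then A is primitive (i.e., some power A^k has all entries positive) if and only if for every column index j there exists a positive integer k_j such that every entry of column j of A^{k_j} is positive. Moreover, the least k with A^k entrywise positive equals the maximum over j of the least such k_j. -/
/-- A nonnegative matrix `A` is primitive iff every column of some power is entirely
positive; moreover the primitive exponent equals the maximum over columns `j` of the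
least `k_j` making column `j` of `A^{k_j}` positive. -/
theorem primitive_iff_columns {n : ℕ} (hn : 0 < n) (A : Matrix (Fin n) (Fin n) ℝ)
    (hA : ∀ i j, 0 ≤ A i j) :
    ((∃ k : ℕ, 0 < k ∧ ∀ i j, 0 < (A ^ k) i j) ↔
      ∀ j : Fin n, ∃ k : ℕ, 0 < k ∧ ∀ i, 0 < (A ^ k) i j) ∧
    ((∃ k : ℕ, 0 < k ∧ ∀ i j, 0 < (A ^ k) i j) →
      sInf {k : ℕ | 0 < k ∧ ∀ i j, 0 < (A ^ k) i j} =
        Finset.univ.sup fun j : Fin n =>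
          sInf {k : ℕ | 0 < k ∧ ∀ i, 0 < (A ^ k) i j}) := by
  -- powers have nonnegative entries
  have hpow : ∀ k, ∀ i j : Fin n, 0 ≤ (A ^ k) i j := by
    intro k
    induction k with
    | zero =>
      intro i j
      simp only [pow_zero, Matrix.one_apply]
      split <;> norm_num
    | succ k ih =>
      intro i j
      rw [pow_succ, Matrix.mul_apply]
      exact Finset.sum_nonneg fun m _ => mul_nonneg (ih i m) (hA m j)
  -- no row of A is zero, given the column condition
  have rowpos : (∀ j : Fin n, ∃ k : ℕ, 0 < k ∧ ∀ i, 0 < (A ^ k) i j) →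
      ∀ i, ∃ m, 0 < A i m := by
    intro h i
    obtain ⟨k, hk, hcol⟩ := h ⟨0, hn⟩
    by_contra hc
    push_neg at hc
    have hz : ∀ m, A i m = 0 := fun m => le_antisymm (hc m) (hA i m)
    obtain ⟨k', rfl⟩ := Nat.exists_eq_succ_of_ne_zero hk.ne'
    have hzero : (A ^ (k' + 1)) i ⟨0, hn⟩ = 0 := by
      rw [pow_succ', Matrix.mul_apply]
      exact Finset.sum_eq_zero fun m _ => by rw [hz m, zero_mul]
    exact absurd (hcol i) (by rw [hzero]; exact lt_irrefl 0)
  -- column positivity persists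
  have step : (∀ i, ∃ m, 0 < A i m) → ∀ (j : Fin n) (k : ℕ),
      (∀ i, 0 < (A ^ k) i j) → ∀ i, 0 < (A ^ (k + 1)) i j := by
    intro hrow j k hcol i
    obtain ⟨m, hm⟩ := hrow i
    rw [pow_succ', Matrix.mul_apply]
    exact Finset.sum_pos' (fun x _ => mul_nonneg (hA i x) (hpow k x j)
      ) ⟨m, Finset.mem_univ m, mul_pos hm (hcol m)⟩
  have mono : (∀ i, ∃ m, 0 < A i m) → ∀ (j : Fin n) (k l : ℕ), k ≤ l →
      (∀ i, 0 < (A ^ k) i j) → ∀ i, 0 < (A ^ l) i j := by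
    intro hrow j k l hkl hcol
    induction l, hkl using Nat.le_induction with
    | base => exact hcol
    | succ l hl ih => exact step hrow j l ih
  -- backward direction of the iff
  have back : (∀ j : Fin n, ∃ k : ℕ, 0 < k ∧ ∀ i, 0 < (A ^ k) i j) →
      ∃ k : ℕ, 0 < k ∧ ∀ i j, 0 < (A ^ k) i j := by
    intro h
    have hrow := rowpos h
    set K : Fin n → ℕ := fun j => (h j).choose with hK
    refine ⟨Finset.univ.sup K, ?_, ?_⟩
    · have hKj : ∀ j, 0 < K j ∧ ∀ i, 0 < (A ^ K j) i j := fun j => (h j).choose_spec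
      exact lt_of_lt_of_le (hKj ⟨0, hn⟩).1 (Finset.le_sup (Finset.mem_univ _))
    · have hKj : ∀ j, 0 < K j ∧ ∀ i, 0 < (A ^ K j) i j := fun j => (h j).choose_spec
      intro i j
      exact mono hrow j (K j) _ (Finset.le_sup (Finset.mem_univ j)) (hKj j).2 i
  constructor
  · exact ⟨fun ⟨k, hk, hp⟩ j => ⟨k, hk, fun i => hp i j⟩, back⟩
  · rintro hex
    have h : ∀ j : Fin n, ∃ k : ℕ, 0 < k ∧ ∀ i, 0 < (A ^ k) i j :=
      fun j => hex.elim fun k ⟨hk, hp⟩ => ⟨k, hk, fun i => hp i j⟩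
    have hrow := rowpos h
    set N : Fin n → ℕ := fun j => sInf {k : ℕ | 0 < k ∧ ∀ i, 0 < (A ^ k) i j} with hN
    have hNmem : ∀ j, 0 < N j ∧ ∀ i, 0 < (A ^ (N j)) i j := by
      intro j
      exact Nat.sInf_mem (h j)
    set M := Finset.univ.sup N with hM
    have hMmem : 0 < M ∧ ∀ i j, 0 < (A ^ M) i j := by
      constructor
      · exact lt_of_lt_of_le (hNmem ⟨0, hn⟩).1 (Finset.le_sup (Finset.mem_univ _))
      · intro i j
        exact mono hrow j (N j) M (Finset.le_sup (Finset.mem_univ j)) (hNmem j).2 i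
    have hle : sInf {k : ℕ | 0 < k ∧ ∀ i j, 0 < (A ^ k) i j} ≤ M :=
      Nat.sInf_le hMmem
    have hge : M ≤ sInf {k : ℕ | 0 < k ∧ ∀ i j, 0 < (A ^ k) i j} := by
      have hmem := Nat.sInf_mem hex
      apply Finset.sup_le
      intro j _
      exact Nat.sInf_le ⟨hmem.1, fun i => hmem.2 i j⟩
    exact le_antisymm hle hge
end

section
/- Let n ≥ 3. For every integer t with 1 ≤ t ≤ n, there exists an n × n primitive 0-1 matrix A whose primitive exponent equals t (i.e., A^t has all entries positive but A^{t-1} does not). -/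
/-- Auxiliary matrix: rows `i ≥ a` are all ones; row `i < a` has a single one at `i+1`. -/
def expA (n a : ℕ) : Matrix (Fin n) (Fin n) ℕ :=
  fun i j => if a ≤ (i : ℕ) then 1 else if (j : ℕ) = (i : ℕ) + 1 then 1 else 0

lemma expA_pos_row (n a : ℕ) (ha : a < n) :
    ∀ k, 1 ≤ k → ∀ i : Fin n, a ≤ (i : ℕ) → ∀ j, 0 < (expA n a ^ k) i j := by
  intro k
  induction k with
  | zero => intro h; omega
  | succ k ih =>
    intro _ i hi j
    rcases Nat.eq_zero_or_pos k with hk | hk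
    · subst hk
      simp [expA, hi]
    · rw [pow_succ', Matrix.mul_apply]
      apply Finset.sum_pos'
      · intro m _; exact Nat.zero_le _
      · refine ⟨⟨a, ha⟩, Finset.mem_univ _, ?_⟩
        have h1 : 0 < expA n a i ⟨a, ha⟩ := by simp [expA, hi]
        have h2 : 0 < (expA n a ^ k) ⟨a, ha⟩ j := ih hk ⟨a, ha⟩ (le_refl a) j
        exact Nat.mul_pos h1 h2

lemma expA_climb (n a : ℕ) :
    ∀ d (i j : Fin n), (j : ℕ) = (i : ℕ) + d → (i : ℕ) + d ≤ a →
      0 < (expA n a ^ d) i j := by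
  intro d
  induction d with
  | zero =>
    intro i j hj _
    have : j = i := Fin.ext (by omega)
    simp [this, Matrix.one_apply]
  | succ d ih =>
    intro i j hj h
    rw [pow_succ', Matrix.mul_apply]
    apply Finset.sum_pos'
    · intro m _; exact Nat.zero_le _
    · have hi1 : (i : ℕ) + 1 < n := by have := j.isLt; omega
      refine ⟨⟨(i : ℕ) + 1, hi1⟩, Finset.mem_univ _, ?_⟩
      have h1 : 0 < expA n a i ⟨(i : ℕ) + 1, hi1⟩ := by
        have hia : ¬ a ≤ (i : ℕ) := by omega
        simp [expA, hia]
      have h2 : 0 < (expA n a ^ d) ⟨(i : ℕ) + 1, hi1⟩ j :=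
        ih ⟨(i : ℕ) + 1, hi1⟩ j (by simp; omega) (by simp; omega)
      exact Nat.mul_pos h1 h2

lemma expA_zero (n a : ℕ) (hn0 : 0 < n) (ha : a < n) :
    ∀ k, k ≤ a → ∀ j : Fin n,
      (expA n a ^ k) ⟨0, hn0⟩ j = if (j : ℕ) = k then 1 else 0 := by
  intro k
  induction k with
  | zero =>
    intro _ j
    rw [pow_zero, Matrix.one_apply]
    by_cases hj : (j : ℕ) = 0
    · have : (⟨0, hn0⟩ : Fin n) = j := Fin.ext (by simp [hj])
      simp [this, hj]
    · have : (⟨0, hn0⟩ : Fin n) ≠ j := fun h => hj (by simpa using congrArg Fin.val h.symm)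
      simp [this, hj]
  | succ k ih =>
    intro hk j
    have hkn : k < n := by omega
    rw [pow_succ, Matrix.mul_apply]
    rw [Finset.sum_eq_single (⟨k, hkn⟩ : Fin n)]
    · have hka : ¬ a ≤ k := by omega
      simp [ih (by omega : k ≤ a), expA, hka]
    · intro m _ hm
      have : (m : ℕ) ≠ k := fun h => hm (Fin.ext h)
      simp [ih (by omega : k ≤ a), this]
    · intro h; exact absurd (Finset.mem_univ _) h

/-- For `n ≥ 3` and every `1 ≤ t ≤ n`, there exists an `n × n` primitive 0-1 matrix
whose primitive exponent equals `t`. -/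
theorem exists_primitive_matrix_with_exponent (n : ℕ) (hn : 3 ≤ n) (t : ℕ)
    (ht1 : 1 ≤ t) (ht2 : t ≤ n) :
    ∃ A : Matrix (Fin n) (Fin n) ℕ,
      (∀ i j, A i j = 0 ∨ A i j = 1) ∧
      IsLeast {k : ℕ | 0 < k ∧ ∀ i j, 0 < (A ^ k) i j} t := by
  set a := t - 1 with ha_def
  have ha : a < n := by omega
  have hn0 : 0 < n := by omega
  refine ⟨expA n a, ?_, ⟨⟨by omega, ?_⟩, ?_⟩⟩
  · intro i j; unfold expA; split_ifs <;> simp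
  · intro i j
    by_cases hi : a ≤ (i : ℕ)
    · exact expA_pos_row n a ha t (by omega) i hi j
    · have h1 : 0 < (expA n a ^ (a - (i : ℕ))) i ⟨a, ha⟩ :=
        expA_climb n a (a - (i : ℕ)) i ⟨a, ha⟩ (by simp; omega) (by omega)
      have h2 : 0 < (expA n a ^ ((i : ℕ) + 1)) ⟨a, ha⟩ j :=
        expA_pos_row n a ha _ (by omega) ⟨a, ha⟩ (le_refl a) j
      have hsplit : t = (a - (i : ℕ)) + ((i : ℕ) + 1) := by omega
      rw [hsplit, pow_add, Matrix.mul_apply]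
      apply Finset.sum_pos'
      · intro m _; exact Nat.zero_le _
      · exact ⟨⟨a, ha⟩, Finset.mem_univ _, Nat.mul_pos h1 h2⟩
  · intro k hk
    by_contra hlt
    push_neg at hlt
    have hzero := expA_zero n a hn0 ha k (by omega) ⟨0, hn0⟩
    have hpos := hk.2 ⟨0, hn0⟩ ⟨0, hn0⟩
    have hk1 : 0 < k := hk.1
    rw [hzero] at hpos
    rw [if_neg (by simp; omega)] at hpos
    omega
end
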